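/- Let Σ be an alphabet and s ≥ 2. For 1 ≤ j ≤ s let τ_j ∈ Σ and ℓ_j ≥ 1, with τ_j ≠ τ_{j+1} for all 1 ≤ j < s and τ₁ ≠ τ_s, and let each index j carry a flag ε_j ∈ {exact, atLeast}. Define B_j = { τ_j^{ℓ_j} } if ε_j = exact and B_j = { τ_j^{e} : e ≥ ℓ_j } if ε_j = atLeast, and let L = B₁ · B₂ ⋯ B_s. Let T = σ₁^{m₁} σ₂^{m₂} ⋯ σ_r^{m_r} be a string given by its run-length encoding, i.e., r ≥ 1, m_i ≥ 1 for all i, and σ_i ≠ σ_{i+1} for all 1 ≤ i < r. Then T ∈ L⁺ if and only if s divides r and for every 0 ≤ j < r, writing j' = (j mod s) + 1: σ_{j+1} = τ_{j'}, and m_{j+1} = ℓ_{j'} if ε_{j'} = exact while m_{j+1} ≥ ℓ_{j'} if ε_{j'} = atLeast. (This is the run-length-encoding matching criterion for T against R_i⁺, for R_i of type ∘+ whose first and last characters are distinct, used in the | + ∘ + algorithm.) -/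

import Mathlib

open Computability

/-- `L⁺ := L · L∗`, the set of concatenations of one or more words of `L`. -/
def Language.plus {α : Type*} (L : Language α) : Language α := L * L∗

/-- The language of one run: if the flag is `true` ("exact"), exactly `ℓ` copies of `τ`;
if the flag is `false` ("atLeast"), at least `ℓ` copies of `τ`. -/
def runLang {α : Type*} (τ : α) (ℓ : ℕ) : Bool → Language α
  | true => {List.replicate ℓ τ}
  | false => {w | ∃ e, ℓ ≤ e ∧ w = List.replicate e τ}

namespace RLEAux

variable {α : Type*}

/-- Flatten a run-length representation. -/
def rf (l : List (α × ℕ)) : List α := (l.map fun p => List.replicate p.2 p.1).flatten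

@[simp] lemma rf_nil : rf ([] : List (α × ℕ)) = [] := rfl

lemma rf_cons (p : α × ℕ) (l : List (α × ℕ)) :
    rf (p :: l) = List.replicate p.2 p.1 ++ rf l := rfl

lemma rf_flatten (L : List (List (α × ℕ))) : rf L.flatten = (L.map rf).flatten := by
  simp [rf, List.map_flatten, List.flatten_flatten, List.map_map]
  rfl

lemma rf_ofFn {n : ℕ} (f : Fin n → α × ℕ) :
    rf (List.ofFn f) = (List.ofFn fun i => List.replicate (f i).2 (f i).1).flatten := by
  simp [rf, List.map_ofFn]
  rfl

lemma rep_cancel : ∀ (n : ℕ) (k : ℕ) (a : α) (u v : List α),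
    (∀ x, u.head? = some x → x ≠ a) → (∀ x, v.head? = some x → x ≠ a) →
    List.replicate n a ++ u = List.replicate k a ++ v → n = k ∧ u = v := by
  intro n
  induction n with
  | zero =>
    intro k a u v hu hv h
    cases k with
    | zero => simpa using h
    | succ k =>
      simp only [List.replicate_zero, List.nil_append, List.replicate_succ,
        List.cons_append] at h
      subst h
      exact absurd rfl (hu a rfl)
  | succ n ih =>
    intro k a u v hu hv h
    cases k with
    | zero =>
      simp only [List.replicate_zero, List.nil_append, List.replicate_succ,
        List.cons_append] at h
      exact absurd rfl (hv a (by rw [← h]; rfl))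
    | succ k =>
      simp only [List.replicate_succ, List.cons_append, List.cons.injEq] at h
      obtain ⟨hn, hu'⟩ := ih k a u v hu hv h.2
      exact ⟨by omega, hu'⟩

lemma rf_head_ne {a : α} {l : List (α × ℕ)} (hl : ∀ p ∈ l, 1 ≤ p.2)
    (h : ∀ p ∈ l.head?, p.1 ≠ a) : ∀ x, (rf l).head? = some x → x ≠ a := by
  cases l with
  | nil => simp [rf]
  | cons p t =>
    intro x hx
    have hp : 1 ≤ p.2 := hl p (by simp)
    rw [rf_cons] at hx
    obtain ⟨n, hn⟩ : ∃ n, p.2 = n + 1 := ⟨p.2 - 1, by omega⟩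
    rw [hn] at hx
    simp only [List.replicate_succ, List.cons_append, List.head?_cons,
      Option.some.injEq] at hx
    subst hx
    exact h p (by simp)

lemma rf_unique : ∀ (l₁ l₂ : List (α × ℕ)),
    (∀ p ∈ l₁, 1 ≤ p.2) → (∀ p ∈ l₂, 1 ≤ p.2) →
    l₁.Chain' (fun p q => p.1 ≠ q.1) → l₂.Chain' (fun p q => p.1 ≠ q.1) →
    rf l₁ = rf l₂ → l₁ = l₂ := by
  intro l₁
  induction l₁ with
  | nil =>
    intro l₂ _ h₂ _ _ h
    cases l₂ with
    | nil => rfl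
    | cons q t =>
      exfalso
      have hq : 1 ≤ q.2 := h₂ q (by simp)
      rw [rf_cons] at h
      have := congrArg List.length h
      simp at this
      omega
  | cons p t₁ ih =>
    intro l₂ h₁ h₂ hc₁ hc₂ h
    cases l₂ with
    | nil =>
      exfalso
      have hp : 1 ≤ p.2 := h₁ p (by simp)
      rw [rf_cons] at h
      have := congrArg List.length h
      simp at this
      omega
    | cons q t₂ =>
      rw [rf_cons, rf_cons] at h
      have hp : 1 ≤ p.2 := h₁ p (by simp)
      have hq : 1 ≤ q.2 := h₂ q (by simp)
      have hab : p.1 = q.1 := by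
        obtain ⟨n, hn⟩ : ∃ n, p.2 = n + 1 := ⟨p.2 - 1, by omega⟩
        obtain ⟨k, hk⟩ : ∃ k, q.2 = k + 1 := ⟨q.2 - 1, by omega⟩
        rw [hn, hk] at h
        simpa [List.replicate_succ] using congrArg List.head? h
      simp only [List.Chain'] at hc₁ hc₂
      rw [List.isChain_cons] at hc₁ hc₂
      have hu : ∀ x, (rf t₁).head? = some x → x ≠ p.1 :=
        rf_head_ne (fun p hp => h₁ p (by simp [hp]))
          (fun r hr => (hc₁.1 r hr).symm)
      have hv : ∀ x, (rf t₂).head? = some x → x ≠ p.1 :=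
        rf_head_ne (fun p hp => h₂ p (by simp [hp]))
          (fun r hr => hab ▸ (hc₂.1 r hr).symm)
      rw [hab] at h
      obtain ⟨hnk, ht⟩ := rep_cancel p.2 q.2 q.1 (rf t₁) (rf t₂)
        (hab ▸ hu) (hab ▸ hv) h
      have := ih t₂ (fun p hp => h₁ p (by simp [hp])) (fun p hp => h₂ p (by simp [hp]))
        hc₁.2 hc₂.2 ht
      rw [this]
      have : p = q := Prod.ext hab hnk
      rw [this]

def big (s k : ℕ) (g : ℕ → ℕ → α × ℕ) : List (α × ℕ) :=
  (List.ofFn fun t : Fin k => List.ofFn fun j : Fin s => g t j).flatten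

lemma big_succ (s k : ℕ) (g : ℕ → ℕ → α × ℕ) :
    big s (k + 1) g = (List.ofFn fun j : Fin s => g 0 j) ++ big s k (fun t j => g (t + 1) j) := by
  rw [big, List.ofFn_succ]
  simp [big, Fin.val_succ]

@[simp] lemma big_length (s k : ℕ) (g : ℕ → ℕ → α × ℕ) :
    (big s k g).length = k * s := by
  induction k generalizing g with
  | zero => simp [big]
  | succ k ih => rw [big_succ]; simp [ih]; ring

lemma big_getElem (s k : ℕ) (hs : 0 < s) (g : ℕ → ℕ → α × ℕ) (i : ℕ)
    (h : i < (big s k g).length) :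
    (big s k g)[i] = g (i / s) (i % s) := by
  induction k generalizing g i with
  | zero => simp at h
  | succ k ih =>
    have hks : i < (k + 1) * s := by rw [big_length] at h; exact h
    rw [List.getElem_of_eq (big_succ s k g) h]
    by_cases hi : i < s
    · rw [List.getElem_append_left (by simpa using hi), List.getElem_ofFn,
        Nat.div_eq_of_lt hi, Nat.mod_eq_of_lt hi]
    · push_neg at hi
      rw [List.getElem_append_right (by simpa using hi)]
      simp only [List.length_ofFn]
      have hmul : (k + 1) * s = k * s + s := by ring
      have h2 : i - s < (big s k fun t j => g (t + 1) j).length := by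
        rw [big_length]; omega
      rw [ih _ _ h2]
      obtain ⟨j, rfl⟩ : ∃ j, i = j + s := ⟨i - s, by omega⟩
      rw [Nat.add_sub_cancel, Nat.add_div_right _ hs, Nat.add_mod_right]

lemma rf_big (s k : ℕ) (g : ℕ → ℕ → α × ℕ) :
    rf (big s k g) =
      (List.ofFn fun t : Fin k => rf (List.ofFn fun j : Fin s => g t j)).flatten := by
  rw [big, rf_flatten, List.map_ofFn]
  rfl

lemma mem_prod_ofFn : ∀ (n : ℕ) (B : Fin n → Language α) (w : List α),
    w ∈ (List.ofFn B).prod ↔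
      ∃ ws : Fin n → List α, (∀ j, ws j ∈ B j) ∧ w = (List.ofFn ws).flatten := by
  intro n
  induction n with
  | zero =>
    intro B w
    simp only [List.ofFn_zero, List.prod_nil, Language.mem_one]
    exact ⟨fun h => ⟨fun j => [], fun j => j.elim0, by simp [h]⟩,
      fun ⟨ws, _, hw⟩ => by simpa using hw⟩
  | succ n ih =>
    intro B w
    rw [List.ofFn_succ, List.prod_cons, Language.mem_mul]
    constructor
    · rintro ⟨a, ha, b, hb, rfl⟩
      obtain ⟨ws, hws, rfl⟩ := (ih _ b).1 hb
      refine ⟨Fin.cons a ws, fun j => ?_, by simp [List.ofFn_succ]⟩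
      induction j using Fin.cases with
      | zero => simpa using ha
      | succ j => simpa using hws j
    · rintro ⟨ws, hws, rfl⟩
      exact ⟨ws 0, hws 0, _,
        (ih _ _).2 ⟨fun j => ws j.succ, fun j => hws _, rfl⟩, by simp [List.ofFn_succ]⟩

lemma mem_plus_iff {L : Language α} {w : List α} :
    w ∈ Language.plus L ↔
      ∃ ws : List (List α), ws ≠ [] ∧ (∀ u ∈ ws, u ∈ L) ∧ w = ws.flatten := by
  rw [Language.plus, Language.mem_mul]
  constructor
  · rintro ⟨a, ha, b, hb, rfl⟩
    rw [Language.mem_kstar] at hb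
    obtain ⟨Ls, rfl, hLs⟩ := hb
    refine ⟨a :: Ls, by simp, ?_, by simp⟩
    intro u hu
    rcases List.mem_cons.1 hu with rfl | hu
    · exact ha
    · exact hLs u hu
  · rintro ⟨ws, hne, hmem, rfl⟩
    cases ws with
    | nil => exact absurd rfl hne
    | cons a t =>
      exact ⟨a, hmem a (by simp), t.flatten,
        Language.mem_kstar.2 ⟨t, rfl, fun y hy => hmem y (by simp [hy])⟩, by simp⟩

end RLEAux

namespace RLEAux

lemma mem_L_iff {α : Type*} {s : ℕ} (τ : Fin s → α) (ℓ : Fin s → ℕ) (ε : Fin s → Bool)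
    (w : List α) :
    w ∈ (List.ofFn fun j : Fin s => runLang (τ j) (ℓ j) (ε j)).prod ↔
      ∃ e : Fin s → ℕ, (∀ j, if ε j then e j = ℓ j else ℓ j ≤ e j) ∧
        w = rf (List.ofFn fun j => (τ j, e j)) := by
  rw [mem_prod_ofFn]
  constructor
  · rintro ⟨ws, hws, rfl⟩
    have h : ∀ j, ∃ e, (if ε j then e = ℓ j else ℓ j ≤ e) ∧
        ws j = List.replicate e (τ j) := by
      intro j
      have hj := hws j
      cases hε : ε j <;> rw [hε] at hj
      · simp only [runLang] at hj
        obtain ⟨e, he, hrep⟩ := hj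
        exact ⟨e, by simpa using he, hrep⟩
      · simp only [runLang, Set.mem_singleton_iff] at hj
        exact ⟨ℓ j, by simp, hj⟩
    choose e he hrep using h
    refine ⟨e, he, ?_⟩
    rw [rf_ofFn]
    congr 1
    exact congrArg List.ofFn (funext hrep)
  · rintro ⟨e, he, rfl⟩
    refine ⟨fun j => List.replicate (e j) (τ j), fun j => ?_, by rw [rf_ofFn]⟩
    have hj := he j
    cases hε : ε j <;> rw [hε] at hj <;> simp only [runLang]
    · exact ⟨e j, by simpa using hj, rfl⟩
    · rw [show e j = ℓ j by simpa using hj]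
      exact Set.mem_singleton _

end RLEAux

theorem runLengthEncoding_matching_criterion {α : Type*} (s : ℕ) (hs : 2 ≤ s)
    (τ : Fin s → α) (ℓ : Fin s → ℕ) (hℓ : ∀ j, 1 ≤ ℓ j) (ε : Fin s → Bool)
    (hτadj : ∀ (j : ℕ) (h : j + 1 < s), τ ⟨j, by omega⟩ ≠ τ ⟨j + 1, h⟩)
    (hτends : τ ⟨0, by omega⟩ ≠ τ ⟨s - 1, by omega⟩)
    (r : ℕ) (hr : 1 ≤ r) (σ : Fin r → α) (m : Fin r → ℕ) (hm : ∀ i, 1 ≤ m i)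
    (hσadj : ∀ (i : ℕ) (h : i + 1 < r), σ ⟨i, by omega⟩ ≠ σ ⟨i + 1, h⟩) :
    (List.ofFn fun i : Fin r => List.replicate (m i) (σ i)).flatten ∈
        Language.plus ((List.ofFn fun j : Fin s => runLang (τ j) (ℓ j) (ε j)).prod) ↔
      s ∣ r ∧
        ∀ i : Fin r,
          σ i = τ ⟨(i : ℕ) % s, Nat.mod_lt _ (by omega)⟩ ∧
            (if ε ⟨(i : ℕ) % s, Nat.mod_lt _ (by omega)⟩ then
              m i = ℓ ⟨(i : ℕ) % s, Nat.mod_lt _ (by omega)⟩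
            else
              ℓ ⟨(i : ℕ) % s, Nat.mod_lt _ (by omega)⟩ ≤ m i) := by
  classical
  have hs0 : 0 < s := by omega
  have hmm2 : ∀ n : ℕ, n % s % s = n % s := fun n => Nat.mod_eq_of_lt (Nat.mod_lt _ hs0)
  set l₁ : List (α × ℕ) := List.ofFn fun i : Fin r => (σ i, m i) with hl₁
  have hT : (List.ofFn fun i : Fin r => List.replicate (m i) (σ i)).flatten
      = RLEAux.rf l₁ := by rw [hl₁, RLEAux.rf_ofFn]
  have hl₁len : l₁.length = r := by simp [hl₁]
  have hl₁get : ∀ (i : ℕ) (h : i < r), l₁[i]'(by omega) = (σ ⟨i, h⟩, m ⟨i, h⟩) := by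
    intro i h
    simp [hl₁, List.getElem_ofFn]
  have hl₁cnt : ∀ p ∈ l₁, 1 ≤ p.2 := by
    intro p hp
    rw [hl₁, List.mem_ofFn] at hp
    obtain ⟨i, rfl⟩ := hp
    exact hm i
  have hl₁chain : l₁.Chain' (fun p q => p.1 ≠ q.1) := by
    rw [List.Chain', List.isChain_iff_getElem]
    intro i hlen
    rw [hl₁len] at hlen
    have h1 : i + 1 < r := by omega
    simp only [List.get_eq_getElem, hl₁get i (by omega), hl₁get (i + 1) h1]
    exact hσadj i h1
  have hτmod : ∀ i : ℕ, τ ⟨i % s, Nat.mod_lt _ hs0⟩ ≠ τ ⟨(i + 1) % s, Nat.mod_lt _ hs0⟩ := by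
    intro i
    by_cases hcase : i % s + 1 < s
    · have h2 : (i + 1) % s = i % s + 1 := by
        conv_lhs => rw [Nat.add_mod, Nat.mod_eq_of_lt (show 1 < s by omega),
          Nat.mod_eq_of_lt hcase]
      have := hτadj (i % s) (h2 ▸ hcase)
      simp only [h2]
      exact this
    · have hmod : i % s < s := Nat.mod_lt _ hs0
      have h2 : i % s = s - 1 := by omega
      have h3 : (i + 1) % s = 0 := by
        rw [Nat.add_mod, Nat.mod_eq_of_lt (show 1 < s by omega), h2,
          Nat.sub_add_cancel (show 1 ≤ s by omega)]
        simp
      simp only [h2, h3]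
      exact Ne.symm hτends
  rw [hT, RLEAux.mem_plus_iff]
  constructor
  · rintro ⟨ws, hne, hmem, hflat⟩
    set k := ws.length with hk
    have hk1 : 1 ≤ k := by
      rw [hk]
      exact List.length_pos_iff.2 hne
    have hE : ∀ t : Fin k, ∃ e : Fin s → ℕ,
        (∀ j, if ε j then e j = ℓ j else ℓ j ≤ e j) ∧
          ws[(t : ℕ)] = RLEAux.rf (List.ofFn fun j => (τ j, e j)) :=
      fun t => (RLEAux.mem_L_iff τ ℓ ε _).1 (hmem _ (List.getElem_mem _))
    choose E hEc hEr using hE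
    set g : ℕ → ℕ → α × ℕ := fun t j =>
      (τ ⟨j % s, Nat.mod_lt _ hs0⟩,
        if h : t < k then E ⟨t, h⟩ ⟨j % s, Nat.mod_lt _ hs0⟩ else 0) with hg
    have hblock : ∀ t : Fin k,
        (List.ofFn fun j : Fin s => g t j) = List.ofFn fun j : Fin s => (τ j, E t j) := by
      intro t
      refine congrArg List.ofFn (funext fun j => ?_)
      rw [hg]
      simp only [Nat.mod_eq_of_lt j.isLt, Fin.eta, dif_pos t.isLt]
    have hrfbig : RLEAux.rf (RLEAux.big s k g) = ws.flatten := by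
      rw [RLEAux.rf_big]
      have hh : ∀ t : Fin k, RLEAux.rf (List.ofFn fun j : Fin s => g t j) = ws[(t : ℕ)] := by
        intro t
        rw [hblock t, ← hEr t]
      rw [congrArg List.flatten (congrArg List.ofFn (funext hh))]
      exact congrArg List.flatten (List.ofFn_getElem (xs := ws))
    have hbigcnt : ∀ p ∈ RLEAux.big s k g, 1 ≤ p.2 := by
      intro p hp
      rw [RLEAux.big, List.mem_flatten] at hp
      obtain ⟨l, hl, hpl⟩ := hp
      rw [List.mem_ofFn] at hl
      obtain ⟨t, rfl⟩ := hl
      rw [List.mem_ofFn] at hpl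
      obtain ⟨j, rfl⟩ := hpl
      set j' : Fin s := ⟨(j : ℕ) % s, Nat.mod_lt _ hs0⟩ with hj'
      have hgoal : (g (t : ℕ) (j : ℕ)).2 = E ⟨(t : ℕ), t.isLt⟩ j' := by
        rw [hg]
        simp only [dif_pos t.isLt]
        rfl
      rw [hgoal]
      have hc := hEc ⟨(t : ℕ), t.isLt⟩ j'
      have hl' := hℓ j'
      cases hε : ε j' <;> rw [hε] at hc <;> simp at hc
      · exact le_trans hl' hc
      · rw [hc]
        exact hl'
    have hbiglen : (RLEAux.big s k g).length = k * s := RLEAux.big_length s k g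
    have hbigchain : (RLEAux.big s k g).Chain' (fun p q => p.1 ≠ q.1) := by
      rw [List.Chain', List.isChain_iff_getElem]
      intro i hlen
      have h1 : i < (RLEAux.big s k g).length := by omega
      have h2 : i + 1 < (RLEAux.big s k g).length := by omega
      simp only [List.get_eq_getElem, RLEAux.big_getElem s k hs0 g i h1,
        RLEAux.big_getElem s k hs0 g (i + 1) h2]
      simp only [hg, hmm2]
      exact hτmod i
    have heq : l₁ = RLEAux.big s k g :=
      RLEAux.rf_unique l₁ _ hl₁cnt hbigcnt hl₁chain hbigchain (hflat.trans hrfbig.symm)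
    have hlen : r = k * s := by rw [← hbiglen, ← heq, hl₁len]
    refine ⟨⟨k, by rw [hlen, Nat.mul_comm]⟩, fun i => ?_⟩
    have hi : (i : ℕ) < l₁.length := by rw [hl₁len]; exact i.isLt
    have hgete := List.getElem_of_eq heq hi
    have hbig2 : (i : ℕ) < (RLEAux.big s k g).length := by rw [hbiglen]; omega
    rw [hl₁get (i : ℕ) i.isLt, RLEAux.big_getElem s k hs0 g (i : ℕ) hbig2] at hgete
    have hdiv : (i : ℕ) / s < k := by
      rw [Nat.div_lt_iff_lt_mul hs0]
      omega
    rw [hg] at hgete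
    simp only [dif_pos hdiv, hmm2] at hgete
    obtain ⟨hσi, hmi⟩ := Prod.ext_iff.1 hgete
    simp only at hσi hmi
    refine ⟨hσi, ?_⟩
    have hc := hEc ⟨(i : ℕ) / s, hdiv⟩ ⟨(i : ℕ) % s, Nat.mod_lt _ hs0⟩
    rw [← hmi] at hc
    exact hc
  · rintro ⟨⟨k, hk⟩, hcond⟩
    have hk1 : 1 ≤ k := by
      rcases k with _ | k
      · simp at hk; omega
      · omega
    have hrk : r = k * s := by rw [hk, Nat.mul_comm]
    set g : ℕ → ℕ → α × ℕ := fun t j =>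
      (τ ⟨j % s, Nat.mod_lt _ hs0⟩,
        if h : t * s + j % s < r then m ⟨t * s + j % s, h⟩ else 0) with hg
    have heq : l₁ = RLEAux.big s k g := by
      apply List.ext_getElem
      · rw [hl₁len, RLEAux.big_length]; omega
      · intro n h₁ h₂
        rw [hl₁len] at h₁
        rw [hl₁get n h₁, RLEAux.big_getElem s k hs0 g n h₂, hg]
        simp only [hmm2]
        have hdm : n / s * s + n % s = n := Nat.div_add_mod' n s
        simp only [hdm, dif_pos h₁]
        exact Prod.ext (hcond ⟨n, h₁⟩).1 rfl
    have hlt : ∀ (t : Fin k) (j : Fin s), (t : ℕ) * s + (j : ℕ) < r := by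
      intro t j
      have h1 : ((t : ℕ) + 1) * s = (t : ℕ) * s + s := by ring
      have h2 : ((t : ℕ) + 1) * s ≤ k * s := Nat.mul_le_mul_right s t.isLt
      have h3 := j.isLt
      omega
    refine ⟨List.ofFn fun t : Fin k => RLEAux.rf (List.ofFn fun j : Fin s => g t j),
      ?_, ?_, ?_⟩
    · intro hnil
      have := congrArg List.length hnil
      simp at this
      omega
    · intro u hu
      rw [List.mem_ofFn] at hu
      obtain ⟨t, rfl⟩ := hu
      rw [RLEAux.mem_L_iff]
      refine ⟨fun j => m ⟨(t : ℕ) * s + (j : ℕ), hlt t j⟩, fun j => ?_, ?_⟩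
      · have hc := (hcond ⟨(t : ℕ) * s + (j : ℕ), hlt t j⟩).2
        have hmod : ((t : ℕ) * s + (j : ℕ)) % s = (j : ℕ) := by
          rw [Nat.mul_comm, Nat.mul_add_mod, Nat.mod_eq_of_lt j.isLt]
        simp only [hmod, Fin.eta] at hc
        exact hc
      · refine congrArg RLEAux.rf (congrArg List.ofFn (funext fun j => ?_))
        rw [hg]
        simp only [Nat.mod_eq_of_lt j.isLt, Fin.eta, dif_pos (hlt t j)]
    · rw [heq, RLEAux.rf_big]
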